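/- The sequence L(n) defined by the number of rooted spanning forests of the cycle graph C_n, L(n) = Π_{k=0}^{n-1}(1 + 4 sin²(πk/n)), satisfies the recursion L(n+1) = 3 L(n) − L(n−1) + 2 for n ≥ 2. -/

import Mathlib

open Real

/-- `L n = Π_{k=0}^{n-1} (1 + 4 sin²(πk/n))`, the number of rooted spanning forests
of the cycle graph `C_n`. -/
noncomputable def cycleForests (n : ℕ) : ℝ :=
  ∏ k ∈ Finset.range n, (1 + 4 * Real.sin (π * k / n) ^ 2)

open Polynomial in
lemma prod_sub_primRoot_pow (n : ℕ) (hn : 0 < n) {ζ : ℂ} (hζ : IsPrimitiveRoot ζ n)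
    (z : ℂ) : ∏ k ∈ Finset.range n, (z - ζ ^ k) = z ^ n - 1 := by
  have h := X_pow_sub_C_eq_prod hζ hn (one_pow n)
  apply_fun (Polynomial.eval z) at h
  simpa [Polynomial.eval_prod] using h.symm

lemma cycleForests_closed (n : ℕ) (hn : 0 < n) :
    cycleForests n = ((3 + Real.sqrt 5) / 2) ^ n + ((3 + Real.sqrt 5) / 2)⁻¹ ^ n - 2 := by
  set x : ℝ := (3 + Real.sqrt 5) / 2 with hxdef
  have h5 : Real.sqrt 5 ^ 2 = 5 := Real.sq_sqrt (by norm_num)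
  have hxpos : 0 < x := by
    have := Real.sqrt_nonneg 5
    rw [hxdef]; linarith
  have hxne : x ≠ 0 := ne_of_gt hxpos
  have hxC : (x : ℂ) ≠ 0 := Complex.ofReal_ne_zero.mpr hxne
  have hx2 : x ^ 2 = 3 * x - 1 := by rw [hxdef]; nlinarith [h5]
  -- the primitive n-th root of unity
  set ζ : ℂ := Complex.exp (2 * π * Complex.I / n) with hζdef
  have hζ : IsPrimitiveRoot ζ n := Complex.isPrimitiveRoot_exp n hn.ne'
  have hζ' : IsPrimitiveRoot ζ⁻¹ n := hζ.inv
  have hζne : ζ ≠ 0 := by rw [hζdef]; exact Complex.exp_ne_zero _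
  -- per-factor identity over ℂ
  have key : ∀ k : ℕ, ((1 + 4 * Real.sin (π * k / n) ^ 2 : ℝ) : ℂ)
      = ((x : ℂ) - ζ ^ k) * ((x : ℂ) - (ζ⁻¹) ^ k) * (x : ℂ)⁻¹ := by
    intro k
    have hpow : ζ ^ k = Complex.exp (((2 * π * k / n : ℝ) : ℂ) * Complex.I) := by
      rw [hζdef, ← Complex.exp_nat_mul]
      push_cast
      ring_nf
    have hpow' : (ζ⁻¹) ^ k = Complex.exp (-(((2 * π * k / n : ℝ) : ℂ) * Complex.I)) := by
      rw [inv_pow, hpow, ← Complex.exp_neg]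
    have h1 : ζ ^ k + (ζ⁻¹) ^ k = ((2 * Real.cos (2 * π * k / n) : ℝ) : ℂ) := by
      rw [hpow, hpow',
        show -(((2 * π * k / n : ℝ) : ℂ) * Complex.I)
          = -((2 * π * k / n : ℝ) : ℂ) * Complex.I by ring,
        ← Complex.two_cos]
      push_cast [Complex.ofReal_cos]
      ring
    have h2 : ζ ^ k * (ζ⁻¹) ^ k = 1 := by
      rw [inv_pow]
      exact mul_inv_cancel₀ (pow_ne_zero _ hζne)
    have hc : Real.cos (2 * π * k / n) = 1 - 2 * Real.sin (π * k / n) ^ 2 := by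
      rw [show (2 * π * (k : ℝ) / n) = 2 * (π * k / n) by ring, Real.cos_two_mul,
        Real.cos_sq']
      ring
    have hreal : (1 + 4 * Real.sin (π * k / n) ^ 2) * x
        = x ^ 2 - x * (2 * Real.cos (2 * π * k / n)) + 1 := by
      rw [hc, hx2]; ring
    have hC : ((1 + 4 * Real.sin (π * k / n) ^ 2 : ℝ) : ℂ) * (x : ℂ)
        = (x : ℂ) ^ 2 - (x : ℂ) * ((2 * Real.cos (2 * π * k / n) : ℝ) : ℂ) + 1 := by
      exact_mod_cast hreal
    rw [eq_mul_inv_iff_mul_eq₀ hxC, hC]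
    linear_combination (x : ℂ) * h1 - h2
  have hprod : (cycleForests n : ℂ)
      = ((x : ℂ) ^ n - 1) * ((x : ℂ) ^ n - 1) * ((x : ℂ)⁻¹) ^ n := by
    rw [cycleForests, Complex.ofReal_prod, Finset.prod_congr rfl (fun k _ => key k),
      Finset.prod_mul_distrib, Finset.prod_mul_distrib,
      prod_sub_primRoot_pow n hn hζ, prod_sub_primRoot_pow n hn hζ',
      Finset.prod_const, Finset.card_range]
  have hfin : (cycleForests n : ℂ) = ((x ^ n + x⁻¹ ^ n - 2 : ℝ) : ℂ) := by
    rw [hprod]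
    push_cast
    field_simp
    have hxn : (x : ℂ) ^ n * (x : ℂ)⁻¹ ^ n = 1 := by rw [← mul_pow, mul_inv_cancel₀ hxC, one_pow]
    linear_combination ((x : ℂ) ^ n - 2) * hxn
  exact_mod_cast hfin

/-- The forest numbers of cycle graphs satisfy `L(n+1) = 3 L(n) - L(n-1) + 2`
for `n ≥ 2`. -/
theorem cycleForests_recursion (n : ℕ) (hn : 2 ≤ n) :
    cycleForests (n + 1) = 3 * cycleForests n - cycleForests (n - 1) + 2 := by
  obtain ⟨m, rfl⟩ : ∃ m, n = m + 2 := ⟨n - 2, by omega⟩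
  have h5 : Real.sqrt 5 ^ 2 = 5 := Real.sq_sqrt (by norm_num)
  set x : ℝ := (3 + Real.sqrt 5) / 2 with hxdef
  have hxpos : 0 < x := by
    have := Real.sqrt_nonneg 5
    rw [hxdef]; linarith
  have hxne : x ≠ 0 := ne_of_gt hxpos
  set y : ℝ := x⁻¹ with hydef
  have hx2 : x ^ 2 = 3 * x - 1 := by rw [hxdef]; nlinarith [h5]
  have hxy : x * y = 1 := mul_inv_cancel₀ hxne
  have hy2 : y ^ 2 = 3 * y - 1 := by
    have : x ^ 2 * y ^ 2 = 1 := by rw [← mul_pow, hxy, one_pow]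
    nlinarith [hx2, hxy]
  rw [show m + 2 + 1 = (m + 3) from rfl, show m + 2 - 1 = m + 1 from rfl,
    cycleForests_closed (m + 3) (by omega), cycleForests_closed (m + 2) (by omega),
    cycleForests_closed (m + 1) (by omega)]
  rw [← hxdef, ← hydef]
  linear_combination (x ^ (m + 1)) * hx2 + (y ^ (m + 1)) * hy2
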